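/- Let r ≥ 0 and let b, b₁, …, b_r ∈ R[[q]] each have zero constant term (i.e. lie in q·R[[q]]). Then there exist unique φ, φ₁, …, φ_r ∈ ℚ[[q]], each with zero constant term, such that, writing E for the evaluation homomorphism E_{φ,φ₁,…,φ_r}, one has φ = −E(b) and φ_j = −E(b_j) for every j = 1,…,r. Equivalently: there is a unique substitution q ↦ g(q) = q·exp(φ) ∈ q + q²ℚ[[q]], q_j ↦ g_j(q) = exp(φ_j) ∈ 1 + qℚ[[q]], which transforms the formal expression Q·exp(B), where Q = q^{[δE|]}·q₁^{D₁}⋯q_r^{D_r} and B = b·[δE|] + b₁D₁ + ⋯ + b_rD_r, into q^{[δE|]}. -/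

import Mathlib

/-- The Laurent polynomial ring `R = ℚ[q₁^{±1},…,q_r^{±1}]`, realised as the
group algebra of `ℤ^r` over `ℚ`. -/
abbrev LaurentR (r : ℕ) : Type := AddMonoidAlgebra ℚ (Fin r → ℤ)

/-- The formal exponential of `φ ∈ ℚ[[q]]`: for `φ` with zero constant term,
this is `∑ₙ φⁿ/n!` (each coefficient is a finite sum). -/
noncomputable def expOf (φ : PowerSeries ℚ) : PowerSeries ℚ :=
  PowerSeries.mk fun k =>
    ∑ n ∈ Finset.range (k + 1),
      ((n.factorial : ℚ))⁻¹ * PowerSeries.coeff k (φ ^ n)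

/-- Integer powers `uⁿ` of a unit `u` of `ℚ[[q]]` (negative powers are taken
via the power series inverse). -/
noncomputable def zpowPS (u : PowerSeries ℚ) (n : ℤ) : PowerSeries ℚ :=
  u ^ n.toNat * u⁻¹ ^ (-n).toNat

/-- The `ℚ`-algebra map `R → ℚ[[q]]` sending `q_j ↦ exp(φ_j)` (applied to an
element of the Laurent polynomial ring). -/
noncomputable def coeffMap {r : ℕ} (φs : Fin r → PowerSeries ℚ) (x : LaurentR r) :
    PowerSeries ℚ :=
  ∑ m ∈ x.coeff.support, PowerSeries.C (x.coeff m) * ∏ j, zpowPS (expOf (φs j)) (m j)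

/-- The evaluation homomorphism `E_{φ,φ₁,…,φ_r} : R[[q]] → ℚ[[q]]`: apply
`coeffMap φs` coefficientwise and substitute `q ↦ q·exp(φ)`. -/
noncomputable def evalE {r : ℕ} (φ : PowerSeries ℚ) (φs : Fin r → PowerSeries ℚ)
    (b : PowerSeries (LaurentR r)) : PowerSeries ℚ :=
  PowerSeries.mk fun m =>
    ∑ k ∈ Finset.range (m + 1),
      PowerSeries.coeff m
        (coeffMap φs (PowerSeries.coeff k b) *
          (PowerSeries.X * expOf φ) ^ k)


open PowerSeries

/-- Two power series agree in all coefficients of degree `< n`. -/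
def Agree (n : ℕ) (f g : PowerSeries ℚ) : Prop :=
  ∀ t < n, PowerSeries.coeff t f = PowerSeries.coeff t g

namespace Agree

lemma refl (n : ℕ) (f : PowerSeries ℚ) : Agree n f f := fun _ _ => rfl

lemma trans {n f g h} (h1 : Agree n f g) (h2 : Agree n g h) : Agree n f h :=
  fun t ht => (h1 t ht).trans (h2 t ht)

lemma symm {n f g} (h1 : Agree n f g) : Agree n g f := fun t ht => (h1 t ht).symm

lemma mono {n m f g} (h : Agree n f g) (hmn : m ≤ n) : Agree m f g :=
  fun t ht => h t (lt_of_lt_of_le ht hmn)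

lemma neg {n f g} (h : Agree n f g) : Agree n (-f) (-g) := by
  intro t ht; rw [map_neg, map_neg, h t ht]

lemma add {n f f' g g'} (hf : Agree n f f') (hg : Agree n g g') :
    Agree n (f + g) (f' + g') := by
  intro t ht; rw [map_add, map_add, hf t ht, hg t ht]

lemma mul {n f f' g g'} (hf : Agree n f f') (hg : Agree n g g') :
    Agree n (f * g) (f' * g') := by
  intro t ht
  rw [PowerSeries.coeff_mul, PowerSeries.coeff_mul]
  refine Finset.sum_congr rfl fun x hx => ?_
  rw [Finset.HasAntidiagonal.mem_antidiagonal] at hx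
  rw [hf x.1 (by omega), hg x.2 (by omega)]

lemma pow {n f g} (h : Agree n f g) (k : ℕ) : Agree n (f ^ k) (g ^ k) := by
  induction k with
  | zero => simpa using refl n 1
  | succ k ih => rw [pow_succ, pow_succ]; exact ih.mul h

lemma inv {n f g} (h : Agree n f g) : Agree n f⁻¹ g⁻¹ := by
  intro t
  induction t using Nat.strong_induction_on with
  | _ t ih =>
  intro ht
  rw [PowerSeries.coeff_inv, PowerSeries.coeff_inv]
  have hc : PowerSeries.constantCoeff f = PowerSeries.constantCoeff g := by
    simpa [PowerSeries.coeff_zero_eq_constantCoeff] using h 0 (by omega)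
  rw [hc]
  split
  · rfl
  · congr 1
    refine Finset.sum_congr rfl fun x hx => ?_
    rw [Finset.HasAntidiagonal.mem_antidiagonal] at hx
    split
    · rw [h x.1 (by omega), ih x.2 (by omega) (by omega)]
    · rfl

lemma sum {n : ℕ} {ι : Type*} (s : Finset ι) (f g : ι → PowerSeries ℚ)
    (h : ∀ i ∈ s, Agree n (f i) (g i)) :
    Agree n (∑ i ∈ s, f i) (∑ i ∈ s, g i) := by
  classical
  induction s using Finset.induction with
  | empty => simpa using refl n 0
  | @insert a s ha ih =>
    rw [Finset.sum_insert ha, Finset.sum_insert ha]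
    exact (h a (Finset.mem_insert_self a s)).add
      (ih fun i hi => h i (Finset.mem_insert_of_mem hi))

lemma prod {n : ℕ} {ι : Type*} (s : Finset ι) (f g : ι → PowerSeries ℚ)
    (h : ∀ i ∈ s, Agree n (f i) (g i)) :
    Agree n (∏ i ∈ s, f i) (∏ i ∈ s, g i) := by
  classical
  induction s using Finset.induction with
  | empty => simpa using refl n 1
  | @insert a s ha ih =>
    rw [Finset.prod_insert ha, Finset.prod_insert ha]
    exact (h a (Finset.mem_insert_self a s)).mul
      (ih fun i hi => h i (Finset.mem_insert_of_mem hi))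

lemma expOf_ {n f g} (h : Agree n f g) : Agree n (expOf f) (expOf g) := by
  intro t ht
  rw [expOf, expOf, PowerSeries.coeff_mk, PowerSeries.coeff_mk]
  refine Finset.sum_congr rfl fun k _ => ?_
  rw [h.pow k t ht]

lemma zpowPS_ {n f g} (h : Agree n f g) (m : ℤ) :
    Agree n (zpowPS f m) (zpowPS g m) := by
  unfold zpowPS
  exact (h.pow _).mul (h.inv.pow _)

lemma coeffMap_ {r n} {φs φs' : Fin r → PowerSeries ℚ}
    (hs : ∀ j, Agree n (φs j) (φs' j)) (x : LaurentR r) :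
    Agree n (coeffMap φs x) (coeffMap φs' x) := by
  unfold coeffMap
  refine Agree.sum _ _ _ fun m _ => ?_
  exact (refl n _).mul (Agree.prod _ _ _ fun j _ => ((hs j).expOf_).zpowPS_ (m j))

end Agree

lemma coeffMap_zero {r : ℕ} (φs : Fin r → PowerSeries ℚ) :
    coeffMap φs (0 : LaurentR r) = 0 := by
  unfold coeffMap
  rw [AddMonoidAlgebra.coeff_zero, Finsupp.support_zero]
  simp

lemma agree_evalE {r n : ℕ} {φ φ' : PowerSeries ℚ} {φs φs' : Fin r → PowerSeries ℚ}
    (h : Agree n φ φ') (hs : ∀ j, Agree n (φs j) (φs' j))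
    {b : PowerSeries (LaurentR r)} (hb : PowerSeries.constantCoeff b = 0) :
    Agree (n + 1) (evalE φ φs b) (evalE φ' φs' b) := by
  intro m hm
  rw [evalE, evalE, PowerSeries.coeff_mk, PowerSeries.coeff_mk]
  refine Finset.sum_congr rfl fun k _ => ?_
  rcases Nat.eq_zero_or_pos k with rfl | hk1
  · rw [show PowerSeries.coeff 0 b = 0 by
      rw [PowerSeries.coeff_zero_eq_constantCoeff]; exact hb]
    rw [coeffMap_zero, coeffMap_zero]
    simp
  · have hrw : ∀ ψ : PowerSeries ℚ, ∀ A : PowerSeries ℚ,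
        A * (PowerSeries.X * expOf ψ) ^ k = (A * (expOf ψ) ^ k) * PowerSeries.X ^ k := by
      intro ψ A; rw [mul_pow]; ring
    rw [hrw, hrw, PowerSeries.coeff_mul_X_pow', PowerSeries.coeff_mul_X_pow']
    split
    · exact ((Agree.coeffMap_ hs _).mul ((h.expOf_).pow k)) (m - k) (by omega)
    · rfl

lemma constantCoeff_evalE {r : ℕ} (φ : PowerSeries ℚ) (φs : Fin r → PowerSeries ℚ)
    {b : PowerSeries (LaurentR r)} (hb : PowerSeries.constantCoeff b = 0) :
    PowerSeries.constantCoeff (evalE φ φs b) = 0 := by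
  rw [← PowerSeries.coeff_zero_eq_constantCoeff_apply, evalE, PowerSeries.coeff_mk]
  rw [Finset.sum_range_one]
  rw [show PowerSeries.coeff 0 b = 0 by
    rw [PowerSeries.coeff_zero_eq_constantCoeff]; exact hb]
  rw [coeffMap_zero]
  simp

section FixedPoint

variable {r : ℕ} (b : PowerSeries (LaurentR r)) (bs : Fin r → PowerSeries (LaurentR r))

/-- The pair space. -/
abbrev Pair (r : ℕ) := PowerSeries ℚ × (Fin r → PowerSeries ℚ)

def AgreeP (n : ℕ) (p p' : Pair r) : Prop :=
  Agree n p.1 p'.1 ∧ ∀ j, Agree n (p.2 j) (p'.2 j)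

noncomputable def Fmap (p : Pair r) : Pair r :=
  (-evalE p.1 p.2 b, fun j => -evalE p.1 p.2 (bs j))

noncomputable def seq : ℕ → Pair r
  | 0 => (0, fun _ => 0)
  | n + 1 => Fmap b bs (seq n)

variable (hb : PowerSeries.constantCoeff b = 0)
  (hbs : ∀ j, PowerSeries.constantCoeff (bs j) = 0)

lemma agreeP_refl (n : ℕ) (p : Pair r) : AgreeP n p p :=
  ⟨Agree.refl n _, fun _ => Agree.refl n _⟩

lemma agreeP_trans {n : ℕ} {p q s : Pair r} (h1 : AgreeP n p q) (h2 : AgreeP n q s) :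
    AgreeP n p s :=
  ⟨h1.1.trans h2.1, fun j => (h1.2 j).trans (h2.2 j)⟩

lemma agreeP_mono {n m : ℕ} {p q : Pair r} (h : AgreeP n p q) (hmn : m ≤ n) :
    AgreeP m p q :=
  ⟨h.1.mono hmn, fun j => (h.2 j).mono hmn⟩

include hb hbs in
lemma Fmap_contract {n : ℕ} {p p' : Pair r} (h : AgreeP n p p') :
    AgreeP (n + 1) (Fmap b bs p) (Fmap b bs p') :=
  ⟨(agree_evalE h.1 h.2 hb).neg, fun j => (agree_evalE h.1 h.2 (hbs j)).neg⟩

include hb hbs in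
lemma seq_agree_succ (n : ℕ) : AgreeP n (seq b bs n) (seq b bs (n + 1)) := by
  induction n with
  | zero => exact ⟨fun t ht => by omega, fun j t ht => by omega⟩
  | succ n ih => exact Fmap_contract b bs hb hbs ih

include hb hbs in
lemma seq_agree {n m : ℕ} (hnm : n ≤ m) : AgreeP n (seq b bs n) (seq b bs m) := by
  induction m with
  | zero => rw [Nat.le_zero] at hnm; subst hnm; exact agreeP_refl 0 _
  | succ m ih =>
    rcases Nat.lt_or_ge n (m + 1) with hlt | hge
    · exact agreeP_trans (ih (by omega))
        (agreeP_mono (seq_agree_succ b bs hb hbs m) (by omega))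
    · have : n = m + 1 := by omega
      subst this; exact agreeP_refl _ _

noncomputable def limitP : Pair r :=
  (PowerSeries.mk fun m => PowerSeries.coeff m (seq b bs (m + 1)).1,
   fun j => PowerSeries.mk fun m => PowerSeries.coeff m ((seq b bs (m + 1)).2 j))

include hb hbs in
lemma limit_agree (n : ℕ) : AgreeP n (limitP b bs) (seq b bs n) := by
  constructor
  · intro t ht
    rw [limitP, PowerSeries.coeff_mk]
    exact ((seq_agree b bs hb hbs (show t + 1 ≤ n by omega)).1 t (by omega))
  · intro j t ht
    rw [limitP, PowerSeries.coeff_mk]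
    exact ((seq_agree b bs hb hbs (show t + 1 ≤ n by omega)).2 j t (by omega))

include hb hbs in
lemma limit_fixed : Fmap b bs (limitP b bs) = limitP b bs := by
  have key : ∀ m : ℕ, AgreeP (m + 1) (Fmap b bs (limitP b bs)) (seq b bs (m + 1)) :=
    fun m => Fmap_contract b bs hb hbs (limit_agree b bs hb hbs m)
  have h1 : (Fmap b bs (limitP b bs)).1 = (limitP b bs).1 := by
    apply PowerSeries.ext; intro m
    rw [(key m).1 m (by omega)]
    simp only [limitP, PowerSeries.coeff_mk]
  have h2 : ∀ j, (Fmap b bs (limitP b bs)).2 j = (limitP b bs).2 j := by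
    intro j
    apply PowerSeries.ext; intro m
    rw [(key m).2 j m (by omega)]
    simp only [limitP, PowerSeries.coeff_mk]
  exact Prod.ext h1 (funext h2)

end FixedPoint

theorem unique_normalizing_substitution (r : ℕ)
    (b : PowerSeries (LaurentR r)) (bs : Fin r → PowerSeries (LaurentR r))
    (hb : PowerSeries.constantCoeff b = 0)
    (hbs : ∀ j, PowerSeries.constantCoeff (bs j) = 0) :
    ∃! p : PowerSeries ℚ × (Fin r → PowerSeries ℚ),
      (PowerSeries.constantCoeff p.1 = 0 ∧
        ∀ j, PowerSeries.constantCoeff (p.2 j) = 0) ∧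
      p.1 = -evalE p.1 p.2 b ∧
      (∀ j, p.2 j = -evalE p.1 p.2 (bs j)) := by
  have hfix := limit_fixed b bs hb hbs
  set L := limitP b bs with hL
  have e1 : L.1 = -evalE L.1 L.2 b := (congrArg Prod.fst hfix).symm
  have e2 : ∀ j, L.2 j = -evalE L.1 L.2 (bs j) := fun j =>
    (congrFun (congrArg Prod.snd hfix) j).symm
  refine ⟨L, ⟨⟨?_, ?_⟩, e1, e2⟩, ?_⟩
  · rw [e1, map_neg, constantCoeff_evalE _ _ hb, neg_zero]
  · intro j
    rw [e2 j, map_neg, constantCoeff_evalE _ _ (hbs j), neg_zero]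
  · rintro q ⟨-, hq1, hq2⟩
    have hqfix : Fmap b bs q = q :=
      Prod.ext hq1.symm (funext fun j => (hq2 j).symm)
    have hall : ∀ n, AgreeP n q L := by
      intro n
      induction n with
      | zero => exact ⟨fun t ht => by omega, fun j t ht => by omega⟩
      | succ n ih =>
        have := Fmap_contract b bs hb hbs ih
        rwa [hqfix, hfix] at this
    refine Prod.ext ?_ (funext fun j => ?_)
    · exact PowerSeries.ext fun m => (hall (m + 1)).1 m (by omega)
    · exact PowerSeries.ext fun m => (hall (m + 1)).2 j m (by omega)
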